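/- arXiv:2406.16697 — 7 statements merged into one kernel-verified Lean document; each statement's English description precedes it below -/
import Mathlib

section
/- Let b ≥ 2 and d ≥ 1 be natural numbers, let N = b^d, let 1 ≤ g ≤ N, let G ⊆ Fin N be a fixed set of size g, and let σ be a uniformly random permutation of Fin N. Define X(σ) = 1 + (the least index i such that σ(i) ∈ G). Then the expected value of (b^d − 1)/(b − 1) + X equals (b^d − 1)/(b − 1) + (b^d + 1)/(g + 1) (as real numbers). -/
open Finset

lemma subtypeCongr_mem {α : Type*} {p q : α → Prop} [DecidablePred p] [DecidablePred q]
    (e : { x // p x } ≃ { x // q x }) (f : { x // ¬p x } ≃ { x // ¬q x }) (a : α) :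
    Equiv.subtypeCongr e f a = if h : p a then (e ⟨a, h⟩ : α) else (f ⟨a, h⟩ : α) := by
  by_cases h : p a
  · simp [Equiv.subtypeCongr, Equiv.sumCompl_symm_apply_of_pos h, h]
  · simp [Equiv.subtypeCongr, Equiv.sumCompl_symm_apply_of_neg h, h]

def fiberEquiv {α : Type*} [DecidableEq α] (S G : Finset α) :
    {σ : Equiv.Perm α // ∀ i, i ∈ S ↔ σ i ∈ G} ≃
      (({i // i ∈ S} ≃ {i // i ∈ G}) × ({i // i ∉ S} ≃ {i // i ∉ G})) where
  toFun σh := ⟨Equiv.subtypeEquiv σh.1 (fun i => σh.2 i),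
    Equiv.subtypeEquiv σh.1 (fun i => not_iff_not.2 (σh.2 i))⟩
  invFun fg := ⟨Equiv.subtypeCongr fg.1 fg.2, by
    intro i
    rw [subtypeCongr_mem]
    by_cases h : i ∈ S
    · simp [h, (fg.1 ⟨i, h⟩).2]
    · simp [h, (fg.2 ⟨i, h⟩).2]⟩
  left_inv := by
    rintro ⟨σ, hσ⟩
    ext i
    rw [Subtype.coe_mk, subtypeCongr_mem]
    by_cases h : i ∈ S <;> simp [h]
  right_inv := by
    rintro ⟨f, g⟩
    refine Prod.ext ?_ ?_
    · ext i
      simp [subtypeCongr_mem, i.2]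
    · ext i
      simp [subtypeCongr_mem, i.2]

lemma fiber_card {N g : ℕ} (S G : Finset (Fin N)) (hS : S.card = g) (hG : G.card = g) :
    Fintype.card {σ : Equiv.Perm (Fin N) // ∀ i, i ∈ S ↔ σ i ∈ G}
      = g.factorial * (N - g).factorial := by
  rw [Fintype.card_congr (fiberEquiv S G), Fintype.card_prod]
  have e1 : {i // i ∈ S} ≃ {i // i ∈ G} := S.equivOfCardEq (hS.trans hG.symm)
  have e2 : {i : Fin N // i ∉ S} ≃ {i : Fin N // i ∉ G} := by
    apply Fintype.equivOfCardEq
    simp [Fintype.card_subtype_compl, hS, hG]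
  rw [Fintype.card_equiv e1, Fintype.card_equiv e2]
  simp [Fintype.card_subtype_compl, hS]

lemma card_filter_le_fin (N i : ℕ) (hi : i ≤ N) :
    (univ.filter (fun x : Fin N => i ≤ (x : ℕ))).card = N - i := by
  have h2 : (univ.filter (fun x : Fin N => ¬ i ≤ (x : ℕ))).card = i := by
    rw [← Fintype.card_subtype]
    have e : {x : Fin N // ¬ i ≤ (x : ℕ)} ≃ Fin i :=
      { toFun := fun x => ⟨x.1, by omega⟩
        invFun := fun y => ⟨⟨y.1, by omega⟩, by simpa using y.2⟩
        left_inv := fun x => rfl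
        right_inv := fun y => rfl }
    rw [Fintype.card_congr e, Fintype.card_fin]
  have := Finset.card_filter_add_card_filter_not
    (s := (univ : Finset (Fin N))) (p := fun x : Fin N => i ≤ (x : ℕ))
  simp only [Finset.card_univ, Fintype.card_fin] at this
  omega

lemma sum_one_add_min (N g : ℕ) (hg : 1 ≤ g) (hgN : g ≤ N) :
    ∑ S ∈ powersetCard g (univ : Finset (Fin N)),
      (1 + sInf {n : ℕ | ∃ h : n < N, (⟨n, h⟩ : Fin N) ∈ S})
      = (N + 1).choose (g + 1) := by
  have key : ∀ S ∈ powersetCard g (univ : Finset (Fin N)),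
      (1 + sInf {n : ℕ | ∃ h : n < N, (⟨n, h⟩ : Fin N) ∈ S})
      = ∑ i ∈ range (N + 1), if (∀ x ∈ S, i ≤ (x : ℕ)) then 1 else 0 := by
    intro S hS
    rw [Finset.mem_powersetCard] at hS
    obtain ⟨x, hx⟩ : S.Nonempty := Finset.card_pos.mp (by omega)
    set A := {n : ℕ | ∃ h : n < N, (⟨n, h⟩ : Fin N) ∈ S} with hA
    have hAne : A.Nonempty := ⟨(x : ℕ), x.2, by simpa using hx⟩
    have hmem : sInf A ∈ A := Nat.sInf_mem hAne
    obtain ⟨hlt, hS'⟩ := hmem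
    have hiff : ∀ i, (∀ x ∈ S, i ≤ (x : ℕ)) ↔ i ≤ sInf A := by
      intro i
      constructor
      · intro h; exact h _ hS'
      · intro h y hy
        exact h.trans (Nat.sInf_le ⟨y.2, by simpa using hy⟩)
    calc 1 + sInf A = ((range (N + 1)).filter (fun i => i ≤ sInf A)).card := by
          have : (range (N + 1)).filter (fun i => i ≤ sInf A) = range (sInf A + 1) := by
            ext j; simp [Nat.lt_succ_iff]; omega
          rw [this, Finset.card_range]; omega
      _ = ∑ i ∈ range (N + 1), if (∀ x ∈ S, i ≤ (x : ℕ)) then 1 else 0 := by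
          rw [Finset.card_filter]
          exact Finset.sum_congr rfl fun i _ => by simp [hiff i]
  rw [Finset.sum_congr rfl key, Finset.sum_comm]
  have count : ∀ i ∈ range (N + 1),
      (∑ S ∈ powersetCard g (univ : Finset (Fin N)),
        if (∀ x ∈ S, i ≤ (x : ℕ)) then 1 else 0) = (N - i).choose g := by
    intro i hi
    rw [Finset.mem_range] at hi
    rw [← Finset.card_filter]
    have hfe : (powersetCard g (univ : Finset (Fin N))).filter
          (fun S => ∀ x ∈ S, i ≤ ((x : Fin N) : ℕ))
        = powersetCard g (univ.filter (fun x : Fin N => i ≤ (x : ℕ))) := by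
      ext S
      simp only [Finset.mem_filter, Finset.mem_powersetCard, Finset.subset_iff,
        Finset.mem_univ, true_and]
      tauto
    rw [hfe, Finset.card_powersetCard, card_filter_le_fin N i (by omega)]
  rw [Finset.sum_congr rfl count]
  have reflect : ∑ i ∈ range (N + 1), (N - i).choose g
      = ∑ j ∈ range (N + 1), j.choose g := by
    have := Finset.sum_range_reflect (fun j => j.choose g) (N + 1)
    simpa using this
  rw [reflect]
  rw [← Nat.sum_Icc_choose N g]
  apply (Finset.sum_subset ?_ ?_).symm
  · intro j hj
    rw [Finset.mem_Icc] at hj; rw [Finset.mem_range]; omega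
  · intro j hj hj'
    rw [Finset.mem_range] at hj; rw [Finset.mem_Icc] at hj'
    exact Nat.choose_eq_zero_of_lt (by omega)

lemma sum_perm_first_goal (N g : ℕ) (hg : 1 ≤ g) (hgN : g ≤ N)
    (G : Finset (Fin N)) (hG : G.card = g) :
    ∑ σ : Equiv.Perm (Fin N), (1 + sInf {n : ℕ | ∃ h : n < N, σ ⟨n, h⟩ ∈ G})
      = g.factorial * (N - g).factorial * (N + 1).choose (g + 1) := by
  classical
  set Φ : Equiv.Perm (Fin N) → Finset (Fin N) :=
    fun σ => univ.filter (fun i => σ i ∈ G) with hΦ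
  have hterm : ∀ σ : Equiv.Perm (Fin N),
      (1 + sInf {n : ℕ | ∃ h : n < N, σ ⟨n, h⟩ ∈ G})
      = 1 + sInf {n : ℕ | ∃ h : n < N, (⟨n, h⟩ : Fin N) ∈ Φ σ} := by
    intro σ
    congr 1
    congr 1
    ext n
    simp [hΦ]
  have hmaps : ∀ σ : Equiv.Perm (Fin N), Φ σ ∈ powersetCard g (univ : Finset (Fin N)) := by
    intro σ
    rw [Finset.mem_powersetCard]
    refine ⟨Finset.subset_univ _, ?_⟩
    have : Φ σ = G.image σ.symm := by
      ext i
      simp only [hΦ, Finset.mem_filter, Finset.mem_univ, true_and, Finset.mem_image]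
      constructor
      · intro h; exact ⟨σ i, h, σ.symm_apply_apply i⟩
      · rintro ⟨a, ha, rfl⟩; simpa using ha
    rw [this, Finset.card_image_of_injective _ σ.symm.injective, hG]
  calc ∑ σ : Equiv.Perm (Fin N), (1 + sInf {n : ℕ | ∃ h : n < N, σ ⟨n, h⟩ ∈ G})
      = ∑ σ : Equiv.Perm (Fin N),
          (1 + sInf {n : ℕ | ∃ h : n < N, (⟨n, h⟩ : Fin N) ∈ Φ σ}) :=
        Finset.sum_congr rfl fun σ _ => hterm σ
    _ = ∑ S ∈ powersetCard g (univ : Finset (Fin N)),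
          ∑ σ ∈ univ.filter (fun σ => Φ σ = S),
            (1 + sInf {n : ℕ | ∃ h : n < N, (⟨n, h⟩ : Fin N) ∈ Φ σ}) :=
        (Finset.sum_fiberwise_of_maps_to (fun σ _ => hmaps σ) _).symm
    _ = ∑ S ∈ powersetCard g (univ : Finset (Fin N)),
          (g.factorial * (N - g).factorial)
            * (1 + sInf {n : ℕ | ∃ h : n < N, (⟨n, h⟩ : Fin N) ∈ S}) := by
        refine Finset.sum_congr rfl fun S hS => ?_
        rw [Finset.mem_powersetCard] at hS
        have hfun : ∀ σ ∈ univ.filter (fun σ => Φ σ = S),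
            (1 + sInf {n : ℕ | ∃ h : n < N, (⟨n, h⟩ : Fin N) ∈ Φ σ})
            = 1 + sInf {n : ℕ | ∃ h : n < N, (⟨n, h⟩ : Fin N) ∈ S} := by
          intro σ hσ
          rw [Finset.mem_filter] at hσ
          rw [hσ.2]
        rw [Finset.sum_congr rfl hfun, Finset.sum_const, smul_eq_mul]
        congr 1
        have hcard : (univ.filter (fun σ : Equiv.Perm (Fin N) => Φ σ = S)).card
            = Fintype.card {σ : Equiv.Perm (Fin N) // ∀ i, i ∈ S ↔ σ i ∈ G} := by
          rw [Fintype.card_subtype]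
          congr 1
          apply Finset.filter_congr
          intro σ _
          simp only [hΦ]
          constructor
          · intro h i
            constructor
            · intro hi; have := h ▸ hi; simpa using (Finset.mem_filter.mp this).2
            · intro hi; rw [← h]; simp [hi]
          · intro h
            ext i
            simp [← h i]
        rw [hcard, fiber_card S G hS.2 hG]
    _ = g.factorial * (N - g).factorial * (N + 1).choose (g + 1) := by
        rw [← Finset.mul_sum, sum_one_add_min N g hg hgN]

lemma cast_ratio (N g : ℕ) (hg : 1 ≤ g) (hgN : g ≤ N) :
    ((g.factorial * (N - g).factorial * (N + 1).choose (g + 1) : ℕ) : ℝ)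
      / ((N.factorial : ℕ) : ℝ) = ((N : ℝ) + 1) / ((g : ℝ) + 1) := by
  rw [div_eq_div_iff (by positivity) (by positivity)]
  have hnat : (g.factorial * (N - g).factorial * (N + 1).choose (g + 1)) * (g + 1)
      = (N + 1) * N.factorial := by
    have h := Nat.choose_mul_factorial_mul_factorial (show g + 1 ≤ N + 1 by omega)
    have h1 : N + 1 - (g + 1) = N - g := by omega
    rw [h1, Nat.factorial_succ (g), Nat.factorial_succ N] at h
    calc (g.factorial * (N - g).factorial * (N + 1).choose (g + 1)) * (g + 1)
        = (N + 1).choose (g + 1) * ((g + 1) * g.factorial) * (N - g).factorial := by ring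
      _ = (N + 1) * N.factorial := h
  exact_mod_cast hnat

/-- BrFS on a directed tree with branching factor `b ≥ 2` and `g` goals
uniformly distributed among the `b^d` vertices at goal level `d`: the expected number
of goal tests `(b^d - 1)/(b - 1) + X` equals
`(b^d - 1)/(b - 1) + (b^d + 1)/(g + 1)`, where `X(σ) = 1 + (least index i with
σ i ∈ G)` for a uniformly random permutation `σ` of the goal level. -/
theorem brfs_tree_expected_tests (b d g : ℕ) (hb : 2 ≤ b) (hd : 1 ≤ d)
    (hg1 : 1 ≤ g) (hgN : g ≤ b ^ d)
    (G : Finset (Fin (b ^ d))) (hG : G.card = g) :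
    (∑ σ : Equiv.Perm (Fin (b ^ d)),
        (((b : ℝ) ^ d - 1) / ((b : ℝ) - 1)
          + ((1 + sInf {n : ℕ | ∃ h : n < b ^ d, σ ⟨n, h⟩ ∈ G} : ℕ) : ℝ)))
      / (Fintype.card (Equiv.Perm (Fin (b ^ d))) : ℝ)
    = ((b : ℝ) ^ d - 1) / ((b : ℝ) - 1) + ((b : ℝ) ^ d + 1) / ((g : ℝ) + 1) := by
  classical
  have hKpos : 0 < Fintype.card (Equiv.Perm (Fin (b ^ d))) := Fintype.card_pos
  have hK : ((Fintype.card (Equiv.Perm (Fin (b ^ d))) : ℝ)) ≠ 0 := by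
    exact_mod_cast hKpos.ne'
  rw [Finset.sum_add_distrib, Finset.sum_const, Finset.card_univ, nsmul_eq_mul,
    add_div, mul_div_cancel_left₀ _ hK]
  congr 1
  have hsum : (∑ σ : Equiv.Perm (Fin (b ^ d)),
      ((1 + sInf {n : ℕ | ∃ h : n < b ^ d, σ ⟨n, h⟩ ∈ G} : ℕ) : ℝ))
      = ((g.factorial * (b ^ d - g).factorial * (b ^ d + 1).choose (g + 1) : ℕ) : ℝ) := by
    rw [← Nat.cast_sum]
    exact_mod_cast congrArg (Nat.cast : ℕ → ℝ)
      (sum_perm_first_goal (b ^ d) g hg1 hgN G hG)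
  rw [hsum, Fintype.card_perm, Fintype.card_fin]
  have := cast_ratio (b ^ d) g hg1 hgN
  rw [this]
  push_cast
  ring
end

section
/- Let b ≥ 2, d ≥ 2, and t be natural numbers with t ≥ d and t > 2, and let g = b^d. Then (as real numbers) (b^d − 1)/(b − 1) + (b^d + 1)/(g + 1) ≥ t·b^d/g − (t − d) + 1; equivalently, (b^d − 1)/(b − 1) ≥ d. -/
/-- Case 1 (`g = b^d`) of the crossover theorem: for `b ≥ 2`, `d ≥ 2`,
`t ≥ d`, `t > 2`, the expected goal tests of BrFS are at least those of RRW,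
`(b^d - 1)/(b - 1) + (b^d + 1)/(g + 1) ≥ t·b^d/g - (t - d) + 1`; equivalently,
`(b^d - 1)/(b - 1) ≥ d`. -/
theorem crossover_case_all_goals (b d t g : ℕ) (hb : 2 ≤ b) (hd : 2 ≤ d)
    (htd : d ≤ t) (ht : 2 < t) (hg : g = b ^ d) :
    ((b : ℝ) ^ d - 1) / ((b : ℝ) - 1) + ((b : ℝ) ^ d + 1) / ((g : ℝ) + 1)
        ≥ (t : ℝ) * (b : ℝ) ^ d / (g : ℝ) - ((t : ℝ) - (d : ℝ)) + 1
    ∧ ((b : ℝ) ^ d - 1) / ((b : ℝ) - 1) ≥ (d : ℝ) := by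
  have hb1 : (1 : ℝ) < (b : ℝ) := by exact_mod_cast hb.trans_lt' one_lt_two
  have hbne : (b : ℝ) ≠ 1 := ne_of_gt hb1
  have key : ((b : ℝ) ^ d - 1) / ((b : ℝ) - 1) ≥ (d : ℝ) := by
    rw [← geom_sum_eq hbne d]
    calc (d : ℝ) = ∑ _i ∈ Finset.range d, (1 : ℝ) := by simp
      _ ≤ ∑ i ∈ Finset.range d, (b : ℝ) ^ i := by
          apply Finset.sum_le_sum
          intro i _
          exact one_le_pow₀ hb1.le
  refine ⟨?_, key⟩
  have hbd : (0 : ℝ) < (b : ℝ) ^ d := by positivity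
  have hgr : (g : ℝ) = (b : ℝ) ^ d := by rw [hg]; push_cast; ring
  rw [hgr]
  have h1 : ((b : ℝ) ^ d + 1) / ((b : ℝ) ^ d + 1) = 1 := by
    apply div_self; positivity
  have h2 : (t : ℝ) * (b : ℝ) ^ d / (b : ℝ) ^ d = (t : ℝ) := by
    field_simp
  rw [h1, h2]
  linarith
end

section
/- Let b ≥ 2, d ≥ 2, t, and g be natural numbers with t ≥ d, t > 2, 1 ≤ g < b^d, and g ≥ (t − 1)(b − 1) + 1. Then (as real numbers) (b^d − 1)/(b − 1) + (b^d + 1)/(g + 1) ≥ t·b^d/g − (t − d) + 1. -/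
private lemma caseB (β d g B : ℝ) (hβ : 1 ≤ β) (hd : 3 ≤ d)
    (hg1 : (d-1)*β + 1 ≤ g) (hg2 : g ≤ d*β) (hgB : g + 1 ≤ B)
    (hB : (1+(d-2)*β)*(1+β)^2 ≤ B) :
    0 ≤ (B - g)*(g+1-β) + g*(g+1)*(g-1-d*β) := by
  have ha : 0 ≤ g - (d-1)*β - 1 := by linarith
  have hc : 0 ≤ d*β - g := by linarith
  have hβ' : 0 ≤ β - 1 := by linarith
  have hd' : 0 ≤ d - 3 := by linarith
  nlinarith [mul_nonneg ha hc, mul_nonneg ha hβ', mul_nonneg hc hβ',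
    mul_nonneg ha hd', mul_nonneg hc hd', mul_nonneg hβ' hd',
    mul_nonneg (mul_nonneg ha hc) hβ', mul_nonneg (mul_nonneg ha hβ') hβ',
    mul_nonneg (mul_nonneg hc hβ') hβ', mul_nonneg (mul_nonneg ha ha) hc,
    mul_nonneg (mul_nonneg ha hc) hc, sq_nonneg (g-1), sq_nonneg β,
    mul_nonneg (mul_nonneg hd' hβ') hβ', mul_nonneg (mul_nonneg hd' hd') hβ']

/-- Case 2 of the crossover theorem: for `b ≥ 2`, `d ≥ 2`, `t ≥ d`,
`t > 2`, and `1 ≤ g < b^d` with `g ≥ (t - 1)(b - 1) + 1`, the expected goal tests of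
BrFS are at least those of RRW:
`(b^d - 1)/(b - 1) + (b^d + 1)/(g + 1) ≥ t·b^d/g - (t - d) + 1`. -/
theorem crossover_case_threshold (b d t g : ℕ) (hb : 2 ≤ b) (hd : 2 ≤ d)
    (htd : d ≤ t) (ht : 2 < t) (hg1 : 1 ≤ g) (hg2 : g < b ^ d)
    (hg3 : (t - 1) * (b - 1) + 1 ≤ g) :
    ((b : ℝ) ^ d - 1) / ((b : ℝ) - 1) + ((b : ℝ) ^ d + 1) / ((g : ℝ) + 1)
      ≥ (t : ℝ) * (b : ℝ) ^ d / (g : ℝ) - ((t : ℝ) - (d : ℝ)) + 1 := by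
  set β : ℝ := (b : ℝ) - 1 with hβdef
  set B : ℝ := (b : ℝ) ^ d with hBdef
  have hβ : (1:ℝ) ≤ β := by
    have : (2:ℝ) ≤ (b:ℝ) := by exact_mod_cast hb
    simp [hβdef]; linarith
  have hgB : (g:ℝ) + 1 ≤ B := by
    have : (g:ℝ) + 1 ≤ ((b^d : ℕ) : ℝ) := by exact_mod_cast hg2
    simpa [hBdef] using this
  have hgr : (1:ℝ) ≤ (g:ℝ) := by exact_mod_cast hg1
  have htr : (3:ℝ) ≤ (t:ℝ) := by exact_mod_cast ht
  have hdr : (2:ℝ) ≤ (d:ℝ) := by exact_mod_cast hd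
  have htdr : (d:ℝ) ≤ (t:ℝ) := by exact_mod_cast htd
  have hgt : ((t:ℝ) - 1) * β + 1 ≤ (g:ℝ) := by
    have h := hg3
    have ht1 : 1 ≤ t := by omega
    have hb1 : 1 ≤ b := by omega
    have : (((t-1)*(b-1)+1 : ℕ) : ℝ) ≤ (g:ℝ) := by exact_mod_cast h
    push_cast [Nat.cast_sub ht1, Nat.cast_sub hb1] at this
    simpa [hβdef] using this
  -- main quantity
  have hQ : 0 ≤ (B - g)*((g:ℝ)+1-β) + (g:ℝ)*((g:ℝ)+1)*((g:ℝ)-1-(d:ℝ)*β) := by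
    rcases le_or_gt ((d:ℝ)*β + 1) (g:ℝ) with h | h
    · have h1 : (0:ℝ) ≤ B - g := by linarith
      have h2 : (0:ℝ) ≤ (g:ℝ)+1-β := by nlinarith
      have h3 : (0:ℝ) ≤ (g:ℝ)-1-(d:ℝ)*β := by linarith
      have h4 : (0:ℝ) ≤ (g:ℝ)*((g:ℝ)+1) := by positivity
      nlinarith [mul_nonneg h1 h2, mul_nonneg h4 h3]
    · -- then t = d, d ≥ 3
      have htd2 : t = d := by
        by_contra hne
        have : d + 1 ≤ t := by omega
        have : (d:ℝ) + 1 ≤ (t:ℝ) := by exact_mod_cast this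
        nlinarith
      have hd3 : (3:ℝ) ≤ (d:ℝ) := by rw [← htd2] at *; exact htr
      have hg2' : (g:ℝ) ≤ (d:ℝ)*β := by
        -- g < dβ+1 and g, dβ... need real: since g natural and d*β real, use h
        -- g ≤ dβ since... g and dβ reals: g < dβ+1 doesn't give g ≤ dβ directly.
        -- use naturals: g ≤ d*(b-1)
        have hb1 : 1 ≤ b := by omega
        have hnat : g ≤ d * (b-1) := by
          by_contra hc
          push_neg at hc
          have : (d*(b-1)+1 : ℕ) ≤ g := hc
          have : ((d*(b-1)+1 : ℕ) : ℝ) ≤ (g:ℝ) := by exact_mod_cast this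
          push_cast [Nat.cast_sub hb1] at this
          simp only [hβdef] at h
          linarith
        have := (by exact_mod_cast hnat : ((g:ℕ):ℝ) ≤ ((d*(b-1):ℕ):ℝ))
        push_cast [Nat.cast_sub hb1] at this
        simpa [hβdef] using this
      have hg1' : ((d:ℝ)-1)*β + 1 ≤ (g:ℝ) := by
        rw [htd2] at hgt; exact hgt
      have hB2 : (1+((d:ℝ)-2)*β)*(1+β)^2 ≤ B := by
        have hbb : (1:ℝ) + β = (b:ℝ) := by simp [hβdef]
        have hber : 1 + ((d-2:ℕ):ℝ)*β ≤ (1+β)^(d-2) :=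
          one_add_mul_le_pow (by linarith : (-2:ℝ) ≤ β) (d-2)
        have hcast : ((d-2:ℕ):ℝ) = (d:ℝ) - 2 := by
          push_cast [Nat.cast_sub hd]; ring
        rw [hcast] at hber
        have hpos : (0:ℝ) ≤ (1+β)^2 := by positivity
        have := mul_le_mul_of_nonneg_right hber hpos
        calc (1+((d:ℝ)-2)*β)*(1+β)^2 ≤ (1+β)^(d-2)*(1+β)^2 := this
          _ = (1+β)^(d-2+2) := by rw [pow_add]
          _ = B := by rw [hbb, hBdef, Nat.sub_add_cancel hd]
      exact caseB β (d:ℝ) (g:ℝ) B hβ hd3 hg1' hg2' hgB hB2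
  -- clear denominators
  have hβ0 : (0:ℝ) < β := by linarith
  have hg0 : (0:ℝ) < (g:ℝ) := by linarith
  have hg10 : (0:ℝ) < (g:ℝ) + 1 := by linarith
  rw [ge_iff_le, ← sub_nonneg]
  have hP : 0 ≤ (B-1)*g*((g:ℝ)+1) + (B+1)*β*g - (t:ℝ)*B*β*((g:ℝ)+1)
      + ((t:ℝ)-(d:ℝ)-1)*β*(g:ℝ)*((g:ℝ)+1) := by
    have hid : (B-1)*g*((g:ℝ)+1) + (B+1)*β*g - (t:ℝ)*B*β*((g:ℝ)+1)
        + ((t:ℝ)-(d:ℝ)-1)*β*(g:ℝ)*((g:ℝ)+1)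
        = ((B - g)*((g:ℝ)+1-β) + (g:ℝ)*((g:ℝ)+1)*((g:ℝ)-1-(d:ℝ)*β))
          + ((g:ℝ) - 1 - ((t:ℝ)-1)*β)*(((g:ℝ)+1)*(B - (g:ℝ))) := by ring
    rw [hid]
    have h1 : 0 ≤ (g:ℝ) - 1 - ((t:ℝ)-1)*β := by linarith
    have h2 : 0 ≤ ((g:ℝ)+1)*(B - (g:ℝ)) := by nlinarith
    nlinarith [mul_nonneg h1 h2]
  have heq : (B - 1) / β + (B + 1) / ((g:ℝ) + 1)
      - ((t:ℝ) * B / (g:ℝ) - ((t:ℝ) - (d:ℝ)) + 1)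
      = ((B-1)*g*((g:ℝ)+1) + (B+1)*β*g - (t:ℝ)*B*β*((g:ℝ)+1)
        + ((t:ℝ)-(d:ℝ)-1)*β*(g:ℝ)*((g:ℝ)+1)) / (β*(g:ℝ)*((g:ℝ)+1)) := by
    field_simp
    ring
  rw [heq]
  positivity
end

section
/- Let b ≥ 2 and t ≥ 1 be natural numbers and let g be a natural number with 1 ≤ g ≤ b. Then (as real numbers) for the goal level d = 1: if g < b then 1 + (b + 1)/(g + 1) < t·b/g − (t − 1) + 1, and if g = b then 1 + (b + 1)/(g + 1) = t·b/g − (t − 1) + 1. -/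
/-- For goal level `d = 1`, `b ≥ 2`, walk depth `t ≥ 1`, and
`1 ≤ g ≤ b`: if `g < b` then BrFS is strictly faster in expectation than RRW,
`1 + (b + 1)/(g + 1) < t·b/g - (t - 1) + 1`, and if `g = b` the two expectations
are equal. -/
theorem depth_one_brfs_faster (b t g : ℕ) (hb : 2 ≤ b) (ht : 1 ≤ t)
    (hg1 : 1 ≤ g) (hgb : g ≤ b) :
    (g < b → 1 + ((b : ℝ) + 1) / ((g : ℝ) + 1)
        < (t : ℝ) * (b : ℝ) / (g : ℝ) - ((t : ℝ) - 1) + 1)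
    ∧ (g = b → 1 + ((b : ℝ) + 1) / ((g : ℝ) + 1)
        = (t : ℝ) * (b : ℝ) / (g : ℝ) - ((t : ℝ) - 1) + 1) := by
  have hg0 : (0 : ℝ) < g := by exact_mod_cast hg1
  have hg1' : (0 : ℝ) < g + 1 := by linarith
  have ht1 : (1 : ℝ) ≤ t := by exact_mod_cast ht
  have hbg : (g : ℝ) ≤ b := by exact_mod_cast hgb
  constructor
  · intro hlt
    have hlt' : (g : ℝ) < b := by exact_mod_cast hlt
    -- (b+1)/(g+1) < b/g
    have h1 : ((b : ℝ) + 1) / ((g : ℝ) + 1) < (b : ℝ) / g := by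
      rw [div_lt_div_iff₀ hg1' hg0]; nlinarith
    -- t*b/g - (t-1) ≥ b/g
    have h2 : (b : ℝ) / g ≤ (t : ℝ) * b / g - ((t : ℝ) - 1) := by
      have hbg' : (1 : ℝ) ≤ (b : ℝ) / g := (one_le_div hg0).mpr hbg
      have : (t : ℝ) * b / g = t * (b / g) := by ring
      rw [this]
      nlinarith
    linarith
  · intro heq
    subst heq
    field_simp
    ring
end

section
/- Let b ≥ 2 and g be natural numbers with b + 1 ≤ g ≤ b². Then (as real numbers) (b² − 1)/(b − 1) + (b² + 1)/(g + 1) ≥ 2·b²/g + 1. -/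
/-- For `b ≥ 2` and `b + 1 ≤ g ≤ b²` (goal level `d = 2`, depth error
`e = 1`, i.e. `t = 2`), BrFS's expected goal tests are at least RRW's:
`(b² - 1)/(b - 1) + (b² + 1)/(g + 1) ≥ 2b²/g + 1`. -/
theorem depth_two_crossover (b g : ℕ) (hb : 2 ≤ b) (hg1 : b + 1 ≤ g)
    (hg2 : g ≤ b ^ 2) :
    ((b : ℝ) ^ 2 - 1) / ((b : ℝ) - 1) + ((b : ℝ) ^ 2 + 1) / ((g : ℝ) + 1)
      ≥ 2 * (b : ℝ) ^ 2 / (g : ℝ) + 1 := by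
  have hb' : (2:ℝ) ≤ (b:ℝ) := by exact_mod_cast hb
  have hg' : (b:ℝ) + 1 ≤ (g:ℝ) := by exact_mod_cast hg1
  have hg0 : (0:ℝ) < (g:ℝ) := by linarith
  have hb1 : (0:ℝ) < (b:ℝ) - 1 := by linarith
  have e1 : ((b:ℝ)^2 - 1) / ((b:ℝ) - 1) = (b:ℝ) + 1 := by
    field_simp
    ring
  rw [e1, ge_iff_le, ← sub_nonneg]
  have e2 : (b:ℝ) + 1 + ((b:ℝ)^2 + 1) / ((g:ℝ) + 1) - (2 * (b:ℝ)^2 / (g:ℝ) + 1)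
      = ((b:ℝ)*(g:ℝ)^2 + (b:ℝ)*(g:ℝ) - (b:ℝ)^2*(g:ℝ) + (g:ℝ) - 2*(b:ℝ)^2)
        / ((g:ℝ) * ((g:ℝ) + 1)) := by
    field_simp
    ring
  rw [e2]
  apply div_nonneg _ (by positivity)
  nlinarith [mul_nonneg (le_of_lt hg0) (sub_nonneg.mpr hg'),
    mul_nonneg (by linarith : (0:ℝ) ≤ (b:ℝ)) (mul_nonneg (le_of_lt hg0) (sub_nonneg.mpr hg'))]
end

section
/- Let b ≥ 2 be a natural number and set g = b. Then (as real numbers) (b² − 1)/(b − 1) + (b² + 1)/(g + 1) < 2·b²/g + 1; that is, (b + 1) + (b² + 1)/(b + 1) < 2b + 1. -/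
/-- For `b ≥ 2` and `g = b` (goal level `d = 2`, walk depth `t = 2`),
BrFS is still strictly faster in expectation than RRW:
`(b² - 1)/(b - 1) + (b² + 1)/(g + 1) < 2b²/g + 1`; that is,
`(b + 1) + (b² + 1)/(b + 1) < 2b + 1`. -/
theorem depth_two_threshold_tight (b g : ℕ) (hb : 2 ≤ b) (hg : g = b) :
    ((b : ℝ) ^ 2 - 1) / ((b : ℝ) - 1) + ((b : ℝ) ^ 2 + 1) / ((g : ℝ) + 1)
        < 2 * (b : ℝ) ^ 2 / (g : ℝ) + 1
    ∧ ((b : ℝ) + 1) + ((b : ℝ) ^ 2 + 1) / ((b : ℝ) + 1) < 2 * (b : ℝ) + 1 := by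
  rw [hg]
  have hb2 : (2 : ℝ) ≤ (b : ℝ) := by exact_mod_cast hb
  have h0 : (b : ℝ) > 0 := by linarith
  have h2 : (b : ℝ) + 1 > 0 := by linarith
  have hd : ((b : ℝ) ^ 2 + 1) / ((b : ℝ) + 1) < (b : ℝ) := by
    rw [div_lt_iff₀ h2]; nlinarith
  have key : ((b : ℝ) + 1) + ((b : ℝ) ^ 2 + 1) / ((b : ℝ) + 1) < 2 * (b : ℝ) + 1 := by
    linarith
  refine ⟨?_, key⟩
  have e1 : ((b : ℝ) ^ 2 - 1) / ((b : ℝ) - 1) = (b : ℝ) + 1 := by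
    have h1 : (b : ℝ) - 1 ≠ 0 := by intro h; nlinarith
    field_simp
    ring
  have e2 : 2 * (b : ℝ) ^ 2 / (b : ℝ) = 2 * (b : ℝ) := by
    field_simp
  rw [e1, e2]; exact key
end

section
/- Let b ≥ 2 be a natural number and e ≥ 1 a real number. For natural numbers d ≥ 1, define f(d) = ((e·d − 1)(b − 1) + 1) / b^d (a real number). Then f is nonincreasing in d, i.e., f(d + 1) ≤ f(d) for all d ≥ 1. -/
/-- For `b ≥ 2` and real depth error `e ≥ 1`, the goal density
crossover `f(d) = ((e·d - 1)(b - 1) + 1) / b^d` is nonincreasing in `d ≥ 1`. -/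
theorem density_crossover_nonincreasing (b : ℕ) (hb : 2 ≤ b) (e : ℝ) (he : 1 ≤ e) :
    ∀ d : ℕ, 1 ≤ d →
      ((e * (↑(d + 1) : ℝ) - 1) * ((b : ℝ) - 1) + 1) / (b : ℝ) ^ (d + 1)
        ≤ ((e * (d : ℝ) - 1) * ((b : ℝ) - 1) + 1) / (b : ℝ) ^ d := by
  intro d hd
  have hb' : (2:ℝ) ≤ (b:ℝ) := by exact_mod_cast hb
  have hd' : (1:ℝ) ≤ (d:ℝ) := by exact_mod_cast hd
  have hpow : (0:ℝ) < (b:ℝ)^d := by positivity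
  have key : (0:ℝ) ≤ ((b:ℝ)-1) * (e*(d:ℝ)*((b:ℝ)-1) - e - (b:ℝ) + 2) := by
    nlinarith [mul_nonneg (sub_nonneg.2 he) (by linarith : (0:ℝ) ≤ (b:ℝ)-2),
      mul_nonneg (mul_nonneg (by linarith : (0:ℝ) ≤ e) (by linarith : (0:ℝ) ≤ (b:ℝ)-1))
        (by linarith : (0:ℝ) ≤ (d:ℝ)-1)]
  rw [pow_succ, div_le_div_iff₀ (by positivity) hpow]
  push_cast
  nlinarith [mul_nonneg hpow.le key]
end
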